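/- For n ≥ 3, the number of rotational symbol sequences of length n that are distinct up to cyclic permutation equals 2 + ((n-3)/2)·φ(n), where φ is Euler's totient function. -/

import Mathlib

/-- A symbol sequence of length `n` is a function `ZMod n → Bool`
(`true` = `L`, `false` = `R`). -/
def SymbolSeq (n : ℕ) := ZMod n → Bool

/-- The `i`-th left cyclic permutation: `(σ_i S)_j = S_{i+j}`. -/
def cycPerm {n : ℕ} (i : ZMod n) (S : SymbolSeq n) : SymbolSeq n :=
  fun j => S (i + j)

/-- The `i`-th multiplication permutation: `(π_i S)_j = S_{i·j}`. -/
def multPerm {n : ℕ} (i : ZMod n) (S : SymbolSeq n) : SymbolSeq n :=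
  fun j => S (i * j)

/-- The rotational symbol sequence `S[l,m,n]`, defined by `S_{i·d} = L` for
`i mod n ∈ {0,…,l-1}` and `R` otherwise, where `d` is the multiplicative
inverse of `m` mod `n`.  Since `j = i·d ↔ i = j·m (mod n)`, this is
equivalently: `S_j = L` iff `(j·m mod n) < l`. -/
def rss (n l m : ℕ) : SymbolSeq n :=
  fun j => decide ((j * (m : ZMod n)).val < l)

open Finset

namespace RssAux

variable {n : ℕ}

lemma cycPerm_cycPerm (a b : ZMod n) (S : SymbolSeq n) :
    cycPerm a (cycPerm b S) = cycPerm (a + b) S := by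
  funext j; simp [cycPerm, add_comm, add_assoc, add_left_comm]

lemma cycPerm_zero (S : SymbolSeq n) : cycPerm 0 S = S := by
  funext j; simp [cycPerm]

/-- Counting lemma on `range l`. -/
lemma countA (n l s : ℕ) (hl : l ≤ n) (hs : s ≤ n) :
    (((Finset.range l)).filter (fun v => (v + s) % n < l)).card
      = (l - s) + (l - (n - s)) := by
  have hkey : ∀ v ∈ Finset.range l, ((v + s) % n < l ↔ (v + s < l ∨ n ≤ v + s)) := by
    intro v hv
    rw [Finset.mem_range] at hv
    rcases lt_or_ge (v + s) n with h | h
    · rw [Nat.mod_eq_of_lt h]; omega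
    · rw [Nat.mod_eq_sub_mod h, Nat.mod_eq_of_lt (by omega)]; omega
  rw [Finset.filter_congr hkey, Finset.filter_or,
    Finset.card_union_of_disjoint (by
      rw [Finset.disjoint_left]
      intro v hv1 hv2
      simp only [Finset.mem_filter, Finset.mem_range] at hv1 hv2
      omega)]
  congr 1
  · have : (Finset.range l).filter (fun v => v + s < l) = Finset.range (l - s) := by
      ext v; simp only [Finset.mem_filter, Finset.mem_range]; omega
    rw [this, Finset.card_range]
  · have : (Finset.range l).filter (fun v => n ≤ v + s) = Finset.Ico (n - s) l := by
      ext v; simp only [Finset.mem_filter, Finset.mem_range, Finset.mem_Ico]; omega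
    rw [this, Nat.card_Ico]

/-- Counting pairs at distance `t` inside the interval `val < l` of `ZMod n`. -/
lemma countB (l : ℕ) [NeZero n] (hl : l ≤ n) (t : ZMod n) :
    (Finset.univ.filter (fun y : ZMod n => y.val < l ∧ (y + t).val < l)).card
      = (l - t.val) + (l - (n - t.val)) := by
  rw [← countA n l t.val hl (le_of_lt (ZMod.val_lt t))]
  apply Finset.card_nbij' (i := fun y : ZMod n => y.val) (j := fun v : ℕ => (v : ZMod n))
  · intro y hy
    simp only [Finset.mem_coe, Finset.mem_filter, Finset.mem_univ, true_and] at hy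
    simp only [Finset.mem_coe, Finset.mem_filter, Finset.mem_range]
    rw [ZMod.val_add] at hy
    exact ⟨hy.1, hy.2⟩
  · intro v hv
    simp only [Finset.mem_coe, Finset.mem_filter, Finset.mem_range] at hv
    have hvn : v < n := lt_of_lt_of_le hv.1 hl
    simp only [Finset.mem_coe, Finset.mem_filter, Finset.mem_univ, true_and]
    rw [ZMod.val_add, ZMod.val_cast_of_lt hvn]
    exact hv
  · intro y _; exact ZMod.natCast_rightInverse y
  · intro v hv
    simp only [Finset.mem_coe, Finset.mem_filter, Finset.mem_range] at hv
    exact ZMod.val_cast_of_lt (lt_of_lt_of_le hv.1 hl)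

/-- If the affine map `x ↦ a + t x` preserves the interval `val < l`
with `2 ≤ l ≤ n - 2`, then `t = ±1`. -/
lemma key_t (l : ℕ) [NeZero n] (hl2 : 2 ≤ l) (hln : l ≤ n - 2) (a t t' : ZMod n)
    (ht : t * t' = 1) (h : ∀ x : ZMod n, (a + t * x).val < l ↔ x.val < l) :
    t = 1 ∨ t = -1 := by
  have hn4 : 4 ≤ n := by
    have := NeZero.pos n; omega
  have hln' : l ≤ n := by omega
  have ht' : t' * t = 1 := by rw [mul_comm]; exact ht
  have hcard :
      (Finset.univ.filter (fun x : ZMod n => x.val < l ∧ (x + 1).val < l)).card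
        = (Finset.univ.filter (fun y : ZMod n => y.val < l ∧ (y + t).val < l)).card := by
    apply Finset.card_nbij' (i := fun x : ZMod n => a + t * x)
      (j := fun y : ZMod n => t' * (y - a))
    · intro x hx
      simp only [Finset.mem_coe, Finset.mem_filter, Finset.mem_univ, true_and] at hx ⊢
      refine ⟨(h x).mpr hx.1, ?_⟩
      have : a + t * x + t = a + t * (x + 1) := by ring
      rw [this]
      exact (h (x + 1)).mpr hx.2
    · intro y hy
      simp only [Finset.mem_coe, Finset.mem_filter, Finset.mem_univ, true_and] at hy ⊢
      have e1 : a + t * (t' * (y - a)) = y := by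
        rw [← mul_assoc, ht]; ring
      have e2 : a + t * (t' * (y - a) + 1) = y + t := by
        rw [mul_add, ← mul_assoc, ht]; ring
      exact ⟨(h _).mp (by rw [e1]; exact hy.1), (h _).mp (by rw [e2]; exact hy.2)⟩
    · intro x _
      have : t' * (a + t * x - a) = x := by
        rw [add_sub_cancel_left, ← mul_assoc, ht', one_mul]
      exact this
    · intro y _
      have : a + t * (t' * (y - a)) = y := by rw [← mul_assoc, ht]; ring
      exact this
  rw [countB l hln' 1, countB l hln' t] at hcard
  rw [ZMod.val_one'' (by omega)] at hcard
  have hs : t.val < n := ZMod.val_lt t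
  have : t.val = 1 ∨ t.val = n - 1 := by omega
  rcases this with h1 | h1
  · left
    have : ((t.val : ℕ) : ZMod n) = t := ZMod.natCast_rightInverse t
    rw [h1] at this; simpa using this.symm
  · right
    have hv : ((t.val : ℕ) : ZMod n) = t := ZMod.natCast_rightInverse t
    rw [h1] at hv
    rw [← hv]
    have : ((n - 1 : ℕ) : ZMod n) = (n : ZMod n) - 1 := by
      push_cast [Nat.cast_sub (by omega : 1 ≤ n)]; ring
    rw [this, ZMod.natCast_self, zero_sub]

/-- Extraction: if a shift of `S[l,m₁]` equals `S[l,m₂]` with `2 ≤ l ≤ n-2`,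
then `m₂ ≡ ±m₁ (mod n)`. -/
lemma rss_shift_eq (l m₁ m₂ : ℕ) [NeZero n] (h1 : Nat.Coprime m₁ n)
    (h2 : Nat.Coprime m₂ n) (hl2 : 2 ≤ l) (hln : l ≤ n - 2) (k : ZMod n)
    (h : rss n l m₂ = cycPerm k (rss n l m₁)) :
    (m₂ : ZMod n) = (m₁ : ZMod n) ∨ (m₂ : ZMod n) = -(m₁ : ZMod n) := by
  set u1 := ZMod.unitOfCoprime m₁ h1 with hu1
  set u2 := ZMod.unitOfCoprime m₂ h2 with hu2
  have hc1 : ((u1 : ZMod n)) = (m₁ : ZMod n) := ZMod.coe_unitOfCoprime m₁ h1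
  have hc2 : ((u2 : ZMod n)) = (m₂ : ZMod n) := ZMod.coe_unitOfCoprime m₂ h2
  have hiff : ∀ j : ZMod n, (j * (m₂ : ZMod n)).val < l ↔ ((k + j) * (m₁ : ZMod n)).val < l := by
    intro j
    have := congrFun h j
    simp only [rss, cycPerm] at this
    exact decide_eq_decide.mp this
  have hmain : ∀ x : ZMod n,
      (k * m₁ + ((u2⁻¹ : (ZMod n)ˣ) : ZMod n) * (m₁ : ZMod n) * x).val < l ↔ x.val < l := by
    intro x
    have := hiff (((u2⁻¹ : (ZMod n)ˣ) : ZMod n) * x)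
    have e1 : ((u2⁻¹ : (ZMod n)ˣ) : ZMod n) * x * (m₂ : ZMod n) = x := by
      rw [← hc2, mul_comm ((u2⁻¹ : (ZMod n)ˣ) : ZMod n) x, mul_assoc, ← Units.val_mul,
        inv_mul_cancel, Units.val_one, mul_one]
    have e2 : (k + ((u2⁻¹ : (ZMod n)ˣ) : ZMod n) * x) * (m₁ : ZMod n)
        = k * m₁ + ((u2⁻¹ : (ZMod n)ˣ) : ZMod n) * (m₁ : ZMod n) * x := by ring
    rw [e1, e2] at this
    exact this.symm
  have hinv : (((u2⁻¹ : (ZMod n)ˣ) : ZMod n) * (m₁ : ZMod n))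
      * (((u1⁻¹ : (ZMod n)ˣ) : ZMod n) * (m₂ : ZMod n)) = 1 := by
    rw [← hc1, ← hc2]
    calc ((u2⁻¹ : (ZMod n)ˣ) : ZMod n) * (u1 : ZMod n)
          * (((u1⁻¹ : (ZMod n)ˣ) : ZMod n) * (u2 : ZMod n))
        = (((u2⁻¹ * u2) : (ZMod n)ˣ) : ZMod n) * (((u1 * u1⁻¹) : (ZMod n)ˣ) : ZMod n) := by
          push_cast; ring
      _ = 1 := by rw [inv_mul_cancel, mul_inv_cancel]; simp
  rcases key_t l hl2 hln (k * m₁) _ _ hinv hmain with h' | h'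
  · left
    have : (m₁ : ZMod n) = (u2 : ZMod n) * (((u2⁻¹ : (ZMod n)ˣ) : ZMod n) * (m₁ : ZMod n)) := by
      rw [← mul_assoc, ← Units.val_mul, mul_inv_cancel, Units.val_one, one_mul]
    rw [h', mul_one, hc2] at this
    exact this.symm
  · right
    have : (m₁ : ZMod n) = (u2 : ZMod n) * (((u2⁻¹ : (ZMod n)ˣ) : ZMod n) * (m₁ : ZMod n)) := by
      rw [← mul_assoc, ← Units.val_mul, mul_inv_cancel, Units.val_one, one_mul]
    rw [h', hc2] at this
    rw [this]; ring

lemma card_val_lt (l : ℕ) [NeZero n] (hl : l ≤ n) :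
    (Finset.univ.filter (fun y : ZMod n => y.val < l)).card = l := by
  have h : (Finset.univ.filter (fun y : ZMod n => y.val < l)).card
      = (Finset.range l).card := by
    apply Finset.card_nbij' (i := fun y : ZMod n => y.val) (j := fun v : ℕ => (v : ZMod n))
    · intro y hy; simp only [Finset.mem_coe, Finset.mem_filter, Finset.mem_univ, true_and] at hy
      simpa using hy
    · intro v hv; simp only [Finset.mem_coe, Finset.mem_range] at hv
      simp only [Finset.mem_coe, Finset.mem_filter, Finset.mem_univ, true_and]
      rw [ZMod.val_cast_of_lt (lt_of_lt_of_le hv hl)]; exact hv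
    · intro y _; exact ZMod.natCast_rightInverse y
    · intro v hv; simp only [Finset.mem_coe, Finset.mem_range] at hv
      exact ZMod.val_cast_of_lt (lt_of_lt_of_le hv hl)
  rw [h, Finset.card_range]

open Classical in
lemma card_rss (l m : ℕ) [NeZero n] (hm : Nat.Coprime m n) (hl : l ≤ n) :
    (Finset.univ.filter (fun j : ZMod n => rss n l m j = true)).card = l := by
  set u := ZMod.unitOfCoprime m hm with hu
  have hc : ((u : ZMod n)) = (m : ZMod n) := ZMod.coe_unitOfCoprime m hm
  have h : (Finset.univ.filter (fun j : ZMod n => rss n l m j = true)).card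
      = (Finset.univ.filter (fun y : ZMod n => y.val < l)).card := by
    apply Finset.card_nbij' (i := fun j : ZMod n => j * m)
      (j := fun y : ZMod n => y * ((u⁻¹ : (ZMod n)ˣ) : ZMod n))
    · intro j hj; simp only [Finset.mem_coe, Finset.mem_filter, Finset.mem_univ, true_and, rss,
        decide_eq_true_eq] at hj ⊢; exact hj
    · intro y hy; simp only [Finset.mem_coe, Finset.mem_filter, Finset.mem_univ, true_and, rss,
        decide_eq_true_eq] at hy ⊢
      have e : y * ((u⁻¹ : (ZMod n)ˣ) : ZMod n) * (m : ZMod n) = y := by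
        rw [← hc, mul_assoc, ← Units.val_mul, inv_mul_cancel, Units.val_one, mul_one]
      rw [e]; exact hy
    · intro j _; beta_reduce
      rw [← hc, mul_assoc, ← Units.val_mul, mul_inv_cancel, Units.val_one, mul_one]
    · intro y _; beta_reduce
      rw [← hc, mul_assoc, ← Units.val_mul, inv_mul_cancel, Units.val_one, mul_one]
  rw [h, card_val_lt l hl]

open Classical in
lemma card_cycPerm [NeZero n] (k : ZMod n) (S : SymbolSeq n) :
    (Finset.univ.filter (fun j : ZMod n => cycPerm k S j = true)).card
      = (Finset.univ.filter (fun j : ZMod n => S j = true)).card := by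
  apply Finset.card_nbij' (i := fun j : ZMod n => k + j) (j := fun j : ZMod n => j - k)
  · intro j hj; simp only [Finset.mem_filter, Finset.mem_univ, true_and, Finset.mem_coe] at hj ⊢
    exact hj
  · intro j hj; simp only [Finset.mem_filter, Finset.mem_univ, true_and, Finset.mem_coe] at hj ⊢
    show S (k + (j - k)) = true; rw [add_sub_cancel]; exact hj
  · intro j _; beta_reduce; ring
  · intro j _; beta_reduce; ring

/-- Equality of the length parameters. -/
lemma l_eq {l₁ m₁ l₂ m₂ : ℕ} [NeZero n] (h1 : Nat.Coprime m₁ n) (h2 : Nat.Coprime m₂ n)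
    (hl1 : l₁ ≤ n) (hl2 : l₂ ≤ n) (k : ZMod n)
    (h : rss n l₂ m₂ = cycPerm k (rss n l₁ m₁)) : l₁ = l₂ := by
  have e := card_rss (n := n) l₂ m₂ h2 hl2
  rw [h, card_cycPerm, card_rss l₁ m₁ h1 hl1] at e
  exact e

/-- `rss` only depends on `m` mod `n`. -/
lemma rss_congr (l m₁ m₂ : ℕ) (h : (m₁ : ZMod n) = (m₂ : ZMod n)) :
    rss n l m₁ = rss n l m₂ := by
  funext j; simp only [rss, h]

lemma rss_one_eq (m : ℕ) [NeZero n] (hm : Nat.Coprime m n) :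
    rss n 1 m = rss n 1 1 := by
  set u := ZMod.unitOfCoprime m hm with hu
  have hc : ((u : ZMod n)) = (m : ZMod n) := ZMod.coe_unitOfCoprime m hm
  funext j
  simp only [rss, Nat.cast_one, mul_one, Nat.lt_one_iff, ZMod.val_eq_zero, ← hc,
    Units.mul_left_eq_zero]

/-- `S[l,m'']` is a cyclic shift of `S[l,m]` when `m'' ≡ -m`. -/
lemma rss_neg (l m m'' : ℕ) [NeZero n] (hm : Nat.Coprime m n) (hl1 : 1 ≤ l) (hln : l < n)
    (hmm : (m'' : ZMod n) = -(m : ZMod n)) :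
    ∃ k : ZMod n, rss n l m'' = cycPerm k (rss n l m) := by
  set u := ZMod.unitOfCoprime m hm with hu
  have hc : ((u : ZMod n)) = (m : ZMod n) := ZMod.coe_unitOfCoprime m hm
  refine ⟨((l - 1 : ℕ) : ZMod n) * ((u⁻¹ : (ZMod n)ˣ) : ZMod n), ?_⟩
  funext j
  simp only [rss, cycPerm]
  congr 1
  apply propext
  have e1 : (((l - 1 : ℕ) : ZMod n) * ((u⁻¹ : (ZMod n)ˣ) : ZMod n) + j) * (m : ZMod n)
      = ((l - 1 : ℕ) : ZMod n) + j * (m : ZMod n) := by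
    rw [add_mul, mul_assoc, ← hc, ← Units.val_mul, inv_mul_cancel, Units.val_one, mul_one]
  rw [e1, hmm]
  set x := j * (m : ZMod n) with hx
  have hv : x.val < n := ZMod.val_lt x
  have hxv : ((x.val : ℕ) : ZMod n) = x := ZMod.natCast_rightInverse x
  have eneg : (j * -(m : ZMod n)) = ((n - x.val : ℕ) : ZMod n) := by
    rw [Nat.cast_sub (le_of_lt hv), ZMod.natCast_self, zero_sub, hxv]
    ring
  have eadd : ((l - 1 : ℕ) : ZMod n) + x = ((l - 1 + x.val : ℕ) : ZMod n) := by
    rw [Nat.cast_add, hxv]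
  rw [eneg, eadd, ZMod.val_natCast, ZMod.val_natCast]
  set v := x.val with hvv
  rcases Nat.eq_zero_or_pos v with h0 | h0
  · rw [h0, Nat.sub_zero, Nat.mod_self, Nat.add_zero, Nat.mod_eq_of_lt (by omega)]
    omega
  · rw [Nat.mod_eq_of_lt (by omega : n - v < n)]
    rcases lt_or_ge (l - 1 + v) n with h | h
    · rw [Nat.mod_eq_of_lt h]; omega
    · rw [Nat.mod_eq_sub_mod h, Nat.mod_eq_of_lt (by omega)]; omega

/-- A characterization of `val < n - 1`. -/
lemma val_lt_pred_iff [NeZero n] (hn : 1 ≤ n) (x : ZMod n) :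
    x.val < n - 1 ↔ x ≠ ((n - 1 : ℕ) : ZMod n) := by
  have hv : x.val < n := ZMod.val_lt x
  have hxv : ((x.val : ℕ) : ZMod n) = x := ZMod.natCast_rightInverse x
  constructor
  · intro h heq
    rw [← hxv] at heq
    have := congrArg ZMod.val heq
    rw [ZMod.val_natCast, ZMod.val_natCast, Nat.mod_eq_of_lt hv,
      Nat.mod_eq_of_lt (by omega)] at this
    omega
  · intro h
    rcases lt_or_ge x.val (n - 1) with h' | h'
    · exact h'
    · exfalso
      apply h
      rw [← hxv]
      congr 1
      omega

/-- Every `S[n-1,m]` is a shift of `S[n-1,1]`. -/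
lemma rss_pred (m : ℕ) [NeZero n] (hn : 2 ≤ n) (hm : Nat.Coprime m n) :
    ∃ k : ZMod n, rss n (n - 1) m = cycPerm k (rss n (n - 1) 1) := by
  set u := ZMod.unitOfCoprime m hm with hu
  have hc : ((u : ZMod n)) = (m : ZMod n) := ZMod.coe_unitOfCoprime m hm
  set c : ZMod n := ((n - 1 : ℕ) : ZMod n) with hcdef
  refine ⟨c - c * ((u⁻¹ : (ZMod n)ˣ) : ZMod n), ?_⟩
  funext j
  simp only [rss, cycPerm, Nat.cast_one, mul_one]
  congr 1
  apply propext
  rw [val_lt_pred_iff (by omega), val_lt_pred_iff (by omega)]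
  have key : j * (m : ZMod n) = c ↔ j = c * ((u⁻¹ : (ZMod n)ˣ) : ZMod n) := by
    constructor
    · intro h
      rw [← h, ← hc, mul_assoc, ← Units.val_mul, mul_inv_cancel, Units.val_one, mul_one]
    · intro h
      rw [h, ← hc, mul_assoc, ← Units.val_mul, inv_mul_cancel, Units.val_one, mul_one]
  have key2 : c - c * ((u⁻¹ : (ZMod n)ˣ) : ZMod n) + j = c
      ↔ j = c * ((u⁻¹ : (ZMod n)ˣ) : ZMod n) := by
    constructor
    · intro h
      have := congrArg (fun z => z - (c - c * ((u⁻¹ : (ZMod n)ˣ) : ZMod n))) h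
      simpa using this
    · intro h; rw [h]; ring
  rw [← hcdef]
  simp only [Ne, key, key2]

lemma coprime_sub [NeZero n] (m : ℕ) (hmn : m ≤ n) (h : Nat.Coprime m n) :
    Nat.Coprime (n - m) n := by
  rw [← ZMod.isUnit_iff_coprime] at h ⊢
  have e : ((n - m : ℕ) : ZMod n) = -(m : ZMod n) := by
    rw [Nat.cast_sub hmn, ZMod.natCast_self, zero_sub]
  rw [e]
  exact h.neg

lemma coprime_ne_zero (hn : 3 ≤ n) {m : ℕ} (h : Nat.Coprime m n) : m ≠ 0 := by
  intro h0
  rw [h0, Nat.coprime_zero_left] at h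
  omega

lemma two_mul_ne (hn : 3 ≤ n) {m : ℕ} (h : Nat.Coprime m n) : 2 * m ≠ n := by
  intro he
  have hd : m ∣ n := ⟨2, by omega⟩
  have h1 : Nat.gcd m n = m := Nat.gcd_eq_left hd
  have : m = 1 := by rw [← h1]; exact h
  omega

lemma half_totient (hn : 3 ≤ n) :
    2 * ((Finset.range n).filter (fun m => Nat.Coprime m n ∧ 2 * m < n)).card
      = Nat.totient n := by
  haveI : NeZero n := ⟨by omega⟩
  set A := (Finset.range n).filter (fun m => Nat.Coprime m n ∧ 2 * m < n) with hA
  set B := (Finset.range n).filter (fun m => Nat.Coprime m n ∧ n < 2 * m) with hB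
  have hcards : A.card = B.card := by
    apply Finset.card_nbij' (i := fun m => n - m) (j := fun m => n - m)
    · intro m hm
      simp only [hA, hB, Finset.mem_coe, Finset.mem_filter, Finset.mem_range] at hm ⊢
      have h0 : m ≠ 0 := coprime_ne_zero hn hm.2.1
      exact ⟨by omega, coprime_sub m (by omega) hm.2.1, by omega⟩
    · intro m hm
      simp only [hA, hB, Finset.mem_coe, Finset.mem_filter, Finset.mem_range] at hm ⊢
      have h0 : m ≠ 0 := coprime_ne_zero hn hm.2.1
      exact ⟨by omega, coprime_sub m (by omega) hm.2.1, by omega⟩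
    · intro m hm
      simp only [hA, Finset.mem_coe, Finset.mem_filter, Finset.mem_range] at hm
      beta_reduce; omega
    · intro m hm
      simp only [hB, Finset.mem_coe, Finset.mem_filter, Finset.mem_range] at hm
      beta_reduce; omega
  have hunion : (Finset.range n).filter (fun m => Nat.Coprime m n) = A ∪ B := by
    rw [hA, hB, ← Finset.filter_or]
    apply Finset.filter_congr
    intro m _
    constructor
    · intro h
      have h2 := two_mul_ne hn h
      rcases lt_or_gt_of_ne h2 with h' | h'
      · exact Or.inl ⟨h, h'⟩
      · exact Or.inr ⟨h, h'⟩
    · rintro (⟨h, _⟩ | ⟨h, _⟩) <;> exact h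
  have hdisj : Disjoint A B := by
    rw [Finset.disjoint_left]
    intro m hm1 hm2
    simp only [hA, hB, Finset.mem_filter] at hm1 hm2
    omega
  have htot : Nat.totient n = ((Finset.range n).filter (fun m => Nat.Coprime m n)).card := by
    unfold Nat.totient
    congr 1
    apply Finset.filter_congr
    intro m _
    exact Nat.coprime_comm
  rw [htot, hunion, Finset.card_union_of_disjoint hdisj, ← hcards]
  omega

end RssAux

open RssAux

/-- The subtype of sequences that are shifts of rotational symbol sequences. -/
abbrev RssSub (n : ℕ) := {S : SymbolSeq n // ∃ l m : ℕ, ∃ k : ZMod n, 0 < l ∧ l < n ∧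
  Nat.Coprime m n ∧ S = cycPerm k (rss n l m)}

/-- The cyclic-shift relation. -/
abbrev rssRel (n : ℕ) : RssSub n → RssSub n → Prop := fun S T =>
  ∃ k : ZMod n, (T : SymbolSeq n) = cycPerm k (S : SymbolSeq n)

lemma rssRel_equiv (n : ℕ) : Equivalence (rssRel n) := by
  constructor
  · intro S; exact ⟨0, (cycPerm_zero _).symm⟩
  · rintro S T ⟨k, hk⟩
    refine ⟨-k, ?_⟩
    rw [hk, cycPerm_cycPerm, neg_add_cancel, cycPerm_zero]
  · rintro S T U ⟨k1, h1⟩ ⟨k2, h2⟩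
    refine ⟨k2 + k1, ?_⟩
    rw [h2, h1, cycPerm_cycPerm]

lemma rss_classes_main (n : ℕ) (hn : 3 ≤ n) :
    Nat.card (Quot (rssRel n)) = 2 + (n - 3) * Nat.totient n / 2 := by
  haveI : NeZero n := ⟨by omega⟩
  classical
  set A := (Finset.range n).filter (fun m => Nat.Coprime m n ∧ 2 * m < n) with hA
  set P := ((Finset.Ioo 1 (n - 1)) ×ˢ A) ∪ {((1 : ℕ), (1 : ℕ)), (n - 1, 1)} with hP
  have memP : ∀ p : ℕ × ℕ, p ∈ P ↔
      ((1 < p.1 ∧ p.1 < n - 1 ∧ p.2 < n ∧ Nat.Coprime p.2 n ∧ 2 * p.2 < n)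
        ∨ p = (1, 1) ∨ p = (n - 1, 1)) := by
    intro p
    simp only [hP, hA, Finset.mem_union, Finset.mem_product, Finset.mem_Ioo,
      Finset.mem_filter, Finset.mem_range, Finset.mem_insert, Finset.mem_singleton]
    tauto
  have hPfacts : ∀ p : ℕ × ℕ, p ∈ P → 0 < p.1 ∧ p.1 < n ∧ Nat.Coprime p.2 n := by
    intro p hp
    rcases (memP p).mp hp with ⟨h1, h2, _, h4, _⟩ | h | h
    · exact ⟨by omega, by omega, h4⟩
    · rw [h]; exact ⟨by omega, by omega, Nat.coprime_one_left n⟩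
    · rw [h]; exact ⟨by omega, by omega, Nat.coprime_one_left n⟩
  let g : {p : ℕ × ℕ // p ∈ P} → Quot (rssRel n) := fun p =>
    Quot.mk _ ⟨rss n p.1.1 p.1.2, p.1.1, p.1.2, 0, (hPfacts p.1 p.2).1,
      (hPfacts p.1 p.2).2.1, (hPfacts p.1 p.2).2.2, (cycPerm_zero _).symm⟩
  have hinj : Function.Injective g := by
    intro p q hpq
    have hr : rssRel n
        ⟨rss n p.1.1 p.1.2, p.1.1, p.1.2, 0, (hPfacts p.1 p.2).1,
          (hPfacts p.1 p.2).2.1, (hPfacts p.1 p.2).2.2, (cycPerm_zero _).symm⟩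
        ⟨rss n q.1.1 q.1.2, q.1.1, q.1.2, 0, (hPfacts q.1 q.2).1,
          (hPfacts q.1 q.2).2.1, (hPfacts q.1 q.2).2.2, (cycPerm_zero _).symm⟩ :=
      ((rssRel_equiv n).eqvGen_iff).mp (Quot.eq.mp hpq)
    obtain ⟨k, hk'⟩ := hr
    have hk : rss n q.1.1 q.1.2 = cycPerm k (rss n p.1.1 p.1.2) := hk'
    have hcp := (hPfacts p.1 p.2).2.2
    have hcq := (hPfacts q.1 q.2).2.2
    have hlp := (hPfacts p.1 p.2).2.1
    have hlq := (hPfacts q.1 q.2).2.1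
    have hleq : p.1.1 = q.1.1 :=
      l_eq hcp hcq (le_of_lt hlp) (le_of_lt hlq) k hk
    rcases (memP p.1).mp p.2 with hp | hp | hp <;>
      rcases (memP q.1).mp q.2 with hq | hq | hq
    · -- both in the middle range
      rw [← hleq] at hk
      have hme := rss_shift_eq p.1.1 p.1.2 q.1.2 hcp hcq
        (by omega) (by omega) k hk
      have hm : p.1.2 = q.1.2 := by
        rcases hme with he | he
        · have := congrArg ZMod.val he
          rw [ZMod.val_natCast, ZMod.val_natCast, Nat.mod_eq_of_lt hq.2.2.1,
            Nat.mod_eq_of_lt hp.2.2.1] at this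
          omega
        · exfalso
          have hsum : ((q.1.2 + p.1.2 : ℕ) : ZMod n) = 0 := by
            push_cast
            rw [he]; ring
          rw [ZMod.natCast_eq_zero_iff] at hsum
          have hq0 : q.1.2 ≠ 0 := coprime_ne_zero hn hcq
          have := Nat.eq_zero_of_dvd_of_lt hsum (by omega)
          omega
      apply Subtype.ext
      exact Prod.ext hleq hm
    · exfalso; rw [hq] at hleq; simp at hleq; omega
    · exfalso; rw [hq] at hleq; simp at hleq; omega
    · exfalso; rw [hp] at hleq; simp at hleq; omega
    · apply Subtype.ext; rw [hp, hq]
    · exfalso; rw [hp, hq] at hleq; simp at hleq; omega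
    · exfalso; rw [hp] at hleq; simp at hleq; omega
    · exfalso; rw [hp, hq] at hleq; simp at hleq; omega
    · apply Subtype.ext; rw [hp, hq]
  have hsurj : Function.Surjective g := by
    intro q
    induction q using Quot.ind with
    | _ a =>
      obtain ⟨S, l, m, k, hl0, hln, hm, hSeq⟩ := a
      rcases Nat.lt_trichotomy l 2 with hl | hl
      · -- l = 1
        have hl1 : l = 1 := by omega
        subst hl1
        refine ⟨⟨(1, 1), (memP _).mpr (Or.inr (Or.inl rfl))⟩, ?_⟩
        apply Quot.sound
        refine ⟨k, ?_⟩
        show S = cycPerm k (rss n 1 1)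
        rw [hSeq, rss_one_eq m hm]
      · rcases Nat.lt_trichotomy l (n - 1) with hl' | hl'
        · -- 2 ≤ l < n - 1 : middle range
          set m₀ := m % n with hm₀
          have hm0lt : m₀ < n := Nat.mod_lt _ (by omega)
          have hcop0 : Nat.Coprime m₀ n := by
            have h1 : Nat.gcd n m = Nat.gcd (m % n) n := Nat.gcd_rec n m
            unfold Nat.Coprime at hm ⊢
            rw [hm₀, ← h1, Nat.gcd_comm]
            exact hm
          have hcast : ((m₀ : ℕ) : ZMod n) = (m : ZMod n) := ZMod.natCast_mod m n
          have hrw : rss n l m = rss n l m₀ := rss_congr l m m₀ hcast.symm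
          have h2ne := two_mul_ne hn hcop0
          have h0ne := coprime_ne_zero hn hcop0
          rcases lt_or_gt_of_ne h2ne with h2 | h2
          · refine ⟨⟨(l, m₀), (memP _).mpr (Or.inl ⟨by omega, by omega, hm0lt, hcop0, h2⟩)⟩, ?_⟩
            apply Quot.sound
            refine ⟨k, ?_⟩
            show S = cycPerm k (rss n l m₀)
            rw [hSeq, hrw]
          · set m' := n - m₀ with hm'
            have hcop' : Nat.Coprime m' n := coprime_sub m₀ (by omega) hcop0
            have hmm : ((m₀ : ℕ) : ZMod n) = -((m' : ℕ) : ZMod n) := by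
              rw [hm', Nat.cast_sub (by omega : m₀ ≤ n), ZMod.natCast_self, zero_sub, neg_neg]
            obtain ⟨c, hc⟩ := rss_neg l m' m₀ hcop' (by omega) hln hmm
            refine ⟨⟨(l, m'), (memP _).mpr (Or.inl ⟨by omega, by omega, by omega, hcop',
              by omega⟩)⟩, ?_⟩
            apply Quot.sound
            refine ⟨k + c, ?_⟩
            show S = cycPerm (k + c) (rss n l m')
            rw [hSeq, hrw, hc, cycPerm_cycPerm]
        · -- l = n - 1
          have hl1 : l = n - 1 := by omega
          subst hl1
          obtain ⟨c, hc⟩ := rss_pred m (by omega) hm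
          refine ⟨⟨(n - 1, 1), (memP _).mpr (Or.inr (Or.inr rfl))⟩, ?_⟩
          apply Quot.sound
          refine ⟨k + c, ?_⟩
          show S = cycPerm (k + c) (rss n (n - 1) 1)
          rw [hSeq, hc, cycPerm_cycPerm]
  rw [← Nat.card_eq_of_bijective g ⟨hinj, hsurj⟩, Nat.card_eq_finsetCard]
  have hdisjP : Disjoint ((Finset.Ioo 1 (n - 1)) ×ˢ A) ({((1 : ℕ), (1 : ℕ)), (n - 1, 1)} : Finset (ℕ × ℕ)) := by
    rw [Finset.disjoint_left]
    intro p hp1 hp2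
    have h1 := (Finset.mem_product.mp hp1).1
    rw [Finset.mem_Ioo] at h1
    simp only [Finset.mem_insert, Finset.mem_singleton] at hp2
    rcases hp2 with rfl | rfl <;> exact absurd h1 (by simp)
  have hpaircard : ({((1 : ℕ), (1 : ℕ)), (n - 1, 1)} : Finset (ℕ × ℕ)).card = 2 := by
    rw [Finset.card_insert_of_notMem (by simp only [Finset.mem_singleton, Prod.mk.injEq, not_and]; omega), Finset.card_singleton]
  rw [hP, Finset.card_union_of_disjoint hdisjP, Finset.card_product, Nat.card_Ioo, hpaircard]
  have htot := half_totient (n := n) hn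
  rw [← hA] at htot
  rw [← htot]
  have he : (n - 3) * (2 * A.card) = 2 * ((n - 1 - 1 - 1) * A.card) := by
    have : n - 1 - 1 - 1 = n - 3 := by omega
    rw [this]; ring
  rw [he, Nat.mul_div_cancel_left _ (by norm_num : 0 < 2)]
  omega


/-- The number of rotational symbol sequences of length `n` distinct up to
cyclic permutation is `2 + ((n-3)/2)·φ(n)` for `n ≥ 3`. -/
theorem card_rss_classes (n : ℕ) (hn : 3 ≤ n) :
    Nat.card (Quot (fun (S T : {S : SymbolSeq n //
        ∃ l m : ℕ, ∃ k : ZMod n, 0 < l ∧ l < n ∧ Nat.Coprime m n ∧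
          S = cycPerm k (rss n l m)}) =>
      ∃ k : ZMod n, (T : SymbolSeq n) = cycPerm k (S : SymbolSeq n))) =
    2 + (n - 3) * Nat.totient n / 2 := rss_classes_main n hn
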